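/- Let k ≥ 1 and n ≥ 2k+5 be integers. Then the number of digitally convex sets of the k-th power of the cycle on n vertices satisfies n_D(C_n^k) = 2·n_D(C_{n−1}^k) − n_D(C_{n−2}^k) + n_D(C_{n−2k−2}^k). -/

import Mathlib

open SimpleGraph

/-- `N[S]`: the union of closed neighbourhoods of the vertices of `S`. -/
def closedNbhd {V : Type*} (G : SimpleGraph V) (S : Set V) : Set V :=
  ⋃ v ∈ S, insert v (G.neighborSet v)

/-- A set `S` is digitally convex in `G` if every vertex `v` with `N[v] ⊆ N[S]`
belongs to `S`. -/
def DigConvex {V : Type*} (G : SimpleGraph V) (S : Set V) : Prop :=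
  ∀ v : V, insert v (G.neighborSet v) ⊆ closedNbhd G S → v ∈ S

/-- `n_D(G)`: the number of digitally convex sets of `G`. -/
noncomputable def nD {V : Type*} (G : SimpleGraph V) : ℕ :=
  Nat.card {S : Set V // DigConvex G S}

/-- The `k`-th power `C_n^k` of the cycle `C_n`: distinct vertices `i j : ZMod n`
are adjacent iff `j - i ∈ {±1, ±2, …, ±k}`. -/
def cyclePow (n k : ℕ) : SimpleGraph (ZMod n) :=
  SimpleGraph.fromRel (fun i j => ∃ t : ℕ, 1 ≤ t ∧ t ≤ k ∧ j = i + (t : ZMod n))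


namespace NDAux

def WGood (m n : ℕ) (x : ℕ → Bool) : Prop :=
  (∀ i, n ≤ i → x i = false) ∧
  ∀ i, x i = true → ∃ s, s + m ≤ n ∧ s ≤ i ∧ i < s + m ∧ ∀ j, s ≤ j → j < s + m → x j = true

def GoodC (m : ℕ) {n : ℕ} (C : Set (ZMod n)) : Prop :=
  ∀ v ∈ C, ∃ u : ZMod n, (∀ t : ℕ, t < m → u + (t : ZMod n) ∈ C) ∧
    ∃ t : ℕ, t < m ∧ v = u + (t : ZMod n)

noncomputable def L (m n : ℕ) : ℕ := Nat.card {x : ℕ → Bool // WGood m n x}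
noncomputable def aC (m n : ℕ) : ℕ := Nat.card {C : Set (ZMod n) // GoodC m C}
noncomputable def Mm (m j : ℕ) : ℕ := L m (j - 1)
noncomputable def U (m r : ℕ) : ℕ := ∑ i ∈ Finset.range r, Mm m i
noncomputable def T (m q : ℕ) : ℕ := ∑ i ∈ Finset.range (q + 1 - m), (q - i) * Mm m i

instance (m n : ℕ) : Finite {x : ℕ → Bool // WGood m n x} := by
  have : Function.Injective (fun x : {x : ℕ → Bool // WGood m n x} => (fun i : Fin n => x.1 i)) := by
    rintro ⟨x, hx⟩ ⟨y, hy⟩ h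
    ext i
    show x i = y i
    by_cases hi : i < n
    · simpa using congrFun h ⟨i, hi⟩
    · rw [hx.1 i (by omega), hy.1 i (by omega)]
  exact Finite.of_injective _ this

lemma wgood_const_false (m n : ℕ) : WGood m n (fun _ => false) :=
  ⟨fun _ _ => rfl, fun i hi => by simp at hi⟩

lemma L_small {m n : ℕ} (h : n < m) : L m n = 1 := by
  rw [L, Nat.card_eq_one_iff_unique]
  constructor
  · constructor
    rintro ⟨x, hx⟩ ⟨y, hy⟩
    have key : ∀ z : ℕ → Bool, WGood m n z → z = fun _ => false := by
      intro z hz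
      ext i
      by_contra hne
      have : z i = true := by
        cases hzi : z i
        · simp [hzi] at hne
        · rfl
      obtain ⟨s, hs, _⟩ := hz.2 i this
      omega
    exact Subtype.ext ((key x hx).trans (key y hy).symm)
  · exact ⟨⟨_, wgood_const_false m n⟩⟩

lemma L_zero (m : ℕ) : L m 0 = 1 := by
  rw [L, Nat.card_eq_one_iff_unique]
  constructor
  · constructor
    rintro ⟨x, hx⟩ ⟨y, hy⟩
    have key : ∀ z : ℕ → Bool, WGood m 0 z → z = fun _ => false := by
      intro z hz; ext i; exact hz.1 i (Nat.zero_le i)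
    exact Subtype.ext ((key x hx).trans (key y hy).symm)
  · exact ⟨⟨_, wgood_const_false m 0⟩⟩

lemma Mm_zero (m : ℕ) : Mm m 0 = 1 := L_zero m
lemma Mm_succ (m j : ℕ) : Mm m (j + 1) = L m j := rfl
lemma Mm_small {m j : ℕ} (h : j ≤ m) : Mm m j = 1 := by
  rcases Nat.eq_zero_or_pos j with h0 | h0
  · subst h0; exact Mm_zero m
  · exact L_small (by omega)

lemma U_succ (m r : ℕ) : U m (r + 1) = U m r + Mm m r := Finset.sum_range_succ _ r

lemma U_eq (m R : ℕ) (h : 1 ≤ R) : U m R = 1 + ∑ i ∈ Finset.range (R - 1), L m i := by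
  obtain ⟨R', rfl⟩ : ∃ R', R = R' + 1 := ⟨R - 1, by omega⟩
  rw [U, Finset.sum_range_succ']
  simp only [Mm_succ, Mm_zero, Nat.add_sub_cancel]
  omega

abbrev Wt (m n : ℕ) := {x : ℕ → Bool // WGood m n x}

lemma wgood_mono {m n N : ℕ} {x : ℕ → Bool} (h : WGood m n x) (hnN : n ≤ N) :
    WGood m N x := by
  refine ⟨fun i hi => h.1 i (by omega), fun i hi => ?_⟩
  obtain ⟨s, h1, h2, h3, h4⟩ := h.2 i hi
  exact ⟨s, by omega, h2, h3, h4⟩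

lemma wgood_of_top_false {m N : ℕ} {x : ℕ → Bool} (hm : 1 ≤ m) (h : WGood m N x)
    (hN : 1 ≤ N) (hlast : x (N - 1) = false) : WGood m (N - 1) x := by
  constructor
  · intro i hi
    rcases Nat.lt_or_ge i N with hiN | hiN
    · have : i = N - 1 := by omega
      rwa [this]
    · exact h.1 i hiN
  · intro i hi
    obtain ⟨s, h1, h2, h3, h4⟩ := h.2 i hi
    refine ⟨s, ?_, h2, h3, h4⟩
    rcases Nat.lt_or_ge (s + m) N with hsm | hsm
    · omega
    · have : s + m = N := by omega
      have hx : x (N - 1) = true := h4 (N - 1) (by omega) (by omega)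
      rw [hlast] at hx
      exact absurd hx (by simp)

def glue (i N : ℕ) (w : ℕ → Bool) : ℕ → Bool :=
  fun t => if t < i then w t else decide (i + 1 ≤ t ∧ t < N)

def allT (N : ℕ) : ℕ → Bool := fun t => decide (t < N)

lemma allT_good {m N : ℕ} (hm : 1 ≤ m) (hN : m ≤ N) : WGood m N (allT N) := by
  constructor
  · intro i hi; simp [allT]; omega
  · intro i hi
    have hiN : i < N := by simpa [allT] using hi
    rcases Nat.le_total i (N - m) with hc | hc
    · exact ⟨i, by omega, by omega, by omega, fun j hj1 hj2 => by simp [allT]; omega⟩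
    · exact ⟨N - m, by omega, by omega, by omega, fun j hj1 hj2 => by simp [allT]; omega⟩

lemma glue_good {m i N : ℕ} {w : ℕ → Bool} (hm : 1 ≤ m) (hw : WGood m i w) (hiN : i + m < N) :
    WGood m N (glue i N w) := by
  constructor
  · intro t ht
    simp only [glue]
    rw [if_neg (by omega)]
    simp; omega
  · intro t ht
    simp only [glue] at ht
    by_cases htl : t < i
    · rw [if_pos htl] at ht
      obtain ⟨s, h1, h2, h3, h4⟩ := hw.2 t ht
      refine ⟨s, by omega, h2, h3, fun j hj1 hj2 => ?_⟩
      simp only [glue]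
      rw [if_pos (by omega)]
      exact h4 j hj1 hj2
    · rw [if_neg htl] at ht
      have ht' : i + 1 ≤ t ∧ t < N := by simpa using ht
      rcases Nat.le_total t (N - m) with hc | hc
      · refine ⟨t, by omega, by omega, by omega, fun j hj1 hj2 => ?_⟩
        simp only [glue]
        rw [if_neg (by omega)]
        simp; omega
      · refine ⟨N - m, by omega, by omega, by omega, fun j hj1 hj2 => ?_⟩
        simp only [glue]
        rw [if_neg (by omega)]
        simp; omega

/-- the gluing map for the linear decomposition -/
noncomputable def fglue (m N : ℕ) (hm : 1 ≤ m) (hN : m ≤ N) :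
    (Wt m (N - 1) ⊕ (Σ r : ↥(Finset.range (N - m)), Wt m (r : ℕ)) ⊕ Unit) → Wt m N
  | Sum.inl x => ⟨x.1, wgood_mono x.2 (by omega)⟩
  | Sum.inr (Sum.inl ⟨r, w⟩) =>
      ⟨glue (r : ℕ) N w.1, glue_good hm w.2 (by
        have := r.2
        rw [Finset.mem_range] at this
        omega)⟩
  | Sum.inr (Sum.inr _) => ⟨allT N, allT_good hm hN⟩

lemma glue_self (i N : ℕ) (w : ℕ → Bool) : glue i N w i = false := by
  simp only [glue, lt_irrefl, if_false]
  simp only [decide_eq_false_iff_not]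
  omega

lemma glue_run {i N t : ℕ} (w : ℕ → Bool) (h1 : i < t) (h2 : t < N) : glue i N w t = true := by
  simp only [glue]
  rw [if_neg (by omega)]
  simp only [decide_eq_true_eq]
  omega

lemma glue_lt {i N t : ℕ} (w : ℕ → Bool) (h : t < i) : glue i N w t = w t := by
  simp only [glue, if_pos h]

lemma fglue_bij (m N : ℕ) (hm : 1 ≤ m) (hN : m ≤ N) :
    Function.Bijective (fglue m N hm hN) := by
  classical
  have hA : ∀ x : Wt m (N - 1), (fglue m N hm hN (Sum.inl x)).1 (N - 1) = false :=
    fun x => x.2.1 _ le_rfl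
  have hB : ∀ (r : ↥(Finset.range (N - m))) (w : Wt m (r : ℕ)),
      (fglue m N hm hN (Sum.inr (Sum.inl ⟨r, w⟩))).1 (N - 1) = true := by
    intro r w
    have hr := Finset.mem_range.mp r.2
    exact glue_run w.1 (by omega) (by omega)
  have hC : ∀ u : Unit, (fglue m N hm hN (Sum.inr (Sum.inr u))).1 (N - 1) = true := by
    intro u
    simp only [fglue, allT, decide_eq_true_eq]
    omega
  constructor
  · rintro (x1 | (⟨r1, w1⟩ | u1)) (x2 | (⟨r2, w2⟩ | u2)) heq
    · have : x1.1 = x2.1 := by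
        have := congrArg Subtype.val heq
        simpa [fglue] using this
      rw [Subtype.ext this]
    · have h1 := hA x1; rw [heq, hB r2 w2] at h1; simp at h1
    · have h1 := hA x1; rw [heq, hC u2] at h1; simp at h1
    · have h1 := hB r1 w1; rw [heq, hA x2] at h1; simp at h1
    · -- both glue
      have hr1 := Finset.mem_range.mp r1.2
      have hr2 := Finset.mem_range.mp r2.2
      have hfun : glue (r1 : ℕ) N w1.1 = glue (r2 : ℕ) N w2.1 := by
        have := congrArg Subtype.val heq
        simpa [fglue] using this
      have hrr : (r1 : ℕ) = (r2 : ℕ) := by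
        by_contra hne
        rcases Nat.lt_or_ge (r1 : ℕ) (r2 : ℕ) with hlt | hge
        · have e := congrFun hfun (r2 : ℕ)
          rw [glue_self, glue_run w1.1 (by omega) (by omega)] at e
          simp at e
        · have e := congrFun hfun (r1 : ℕ)
          rw [glue_self, glue_run w2.1 (by omega) (by omega)] at e
          simp at e
      have hr12 : r1 = r2 := Subtype.ext hrr
      subst hr12
      have hw : w1.1 = w2.1 := by
        funext t
        rcases Nat.lt_or_ge t (r1 : ℕ) with h | h
        · have e := congrFun hfun t
          rwa [glue_lt w1.1 h, glue_lt w2.1 h] at e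
        · rw [w1.2.1 t h, w2.2.1 t h]
      rw [Subtype.ext hw]
    · -- glue vs allT
      have hr1 := Finset.mem_range.mp r1.2
      have e := congrArg (fun z : Wt m N => z.1 (r1 : ℕ)) heq
      simp only [fglue] at e
      rw [glue_self] at e
      simp [allT, show (r1:ℕ) < N by omega] at e
    · have h1 := hC u1; rw [heq, hA x2] at h1; simp at h1
    · -- allT vs glue
      have hr2 := Finset.mem_range.mp r2.2
      have e := congrArg (fun z : Wt m N => z.1 (r2 : ℕ)) heq
      simp only [fglue] at e
      rw [glue_self] at e
      simp [allT, show (r2:ℕ) < N by omega] at e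
    · rfl
  · -- surjective
    rintro ⟨x, hx⟩
    by_cases h0 : x (N - 1) = false
    · exact ⟨Sum.inl ⟨x, wgood_of_top_false hm hx (by omega) h0⟩, Subtype.ext rfl⟩
    · have h0' : x (N - 1) = true := by
        cases h : x (N - 1)
        · exact absurd h h0
        · rfl
      have hex : ∃ r, ∀ t, r ≤ t → t < N → x t = true :=
        ⟨N, fun t h1 h2 => absurd h2 (by omega)⟩
      set r := Nat.find hex with hr
      have hrspec : ∀ t, r ≤ t → t < N → x t = true := Nat.find_spec hex
      by_cases hr0 : r = 0
      · refine ⟨Sum.inr (Sum.inr ()), Subtype.ext ?_⟩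
        funext t
        simp only [fglue, allT]
        by_cases htN : t < N
        · rw [hrspec t (by omega) htN]
          simp [htN]
        · rw [hx.1 t (by omega)]
          simp
          omega
      · have hrpos : 1 ≤ r := by omega
        have hxr1 : x (r - 1) = false := by
          cases h : x (r - 1)
          · rfl
          · exfalso
            refine Nat.find_min hex (show r - 1 < r by omega) ?_
            intro t h1 h2
            rcases Nat.eq_or_lt_of_le h1 with he | hlt
            · rwa [← he]
            · exact hrspec t (by omega) h2
        obtain ⟨s, hs1, hs2, hs3, hs4⟩ := hx.2 (N - 1) h0'
        have hsm : s + m = N := by omega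
        have hfle : r ≤ N - m := by
          refine Nat.find_le ?_
          intro t h1 h2
          exact hs4 t (by omega) (by omega)
        have hmem : r - 1 ∈ Finset.range (N - m) := Finset.mem_range.mpr (by omega)
        set w : ℕ → Bool := fun t => decide (t < r - 1) && x t with hwdef
        have hwg : WGood m (r - 1) w := by
          constructor
          · intro t ht
            simp only [hwdef, Bool.and_eq_false_iff, decide_eq_false_iff_not]
            left; omega
          · intro t ht
            have ht' : t < r - 1 ∧ x t = true := by
              simpa [hwdef] using ht
            obtain ⟨s', a1, a2, a3, a4⟩ := hx.2 t ht'.2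
            have ha : s' + m ≤ r - 1 := by
              by_contra hc
              push_neg at hc
              have : x (r - 1) = true := a4 (r - 1) (by omega) (by omega)
              rw [hxr1] at this
              simp at this
            refine ⟨s', ha, a2, a3, fun j hj1 hj2 => ?_⟩
            simp only [hwdef, Bool.and_eq_true, decide_eq_true_eq]
            exact ⟨by omega, a4 j hj1 hj2⟩
        refine ⟨Sum.inr (Sum.inl ⟨⟨r - 1, hmem⟩, ⟨w, hwg⟩⟩), Subtype.ext ?_⟩
        funext t
        show glue (r - 1) N w t = x t
        rcases Nat.lt_or_ge t (r - 1) with h1 | h1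
        · rw [glue_lt w h1]
          simp [hwdef, h1]
        · rcases Nat.eq_or_lt_of_le h1 with h2 | h2
          · rw [← h2, glue_self, hxr1]
          · rcases Nat.lt_or_ge t N with h3 | h3
            · rw [glue_run w (by omega) h3, hrspec t (by omega) h3]
            · rw [hx.1 t (by omega)]
              simp only [glue]
              rw [if_neg (by omega)]
              simp only [decide_eq_false_iff_not]
              omega

lemma L_rec {m N : ℕ} (hm : 1 ≤ m) (hN : m ≤ N) :
    L m N = L m (N - 1) + (∑ i ∈ Finset.range (N - m), L m i) + 1 := by
  classical
  have e := Nat.card_congr (Equiv.ofBijective _ (fglue_bij m N hm hN))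
  rw [Nat.card_sum, Nat.card_sum] at e
  have hsig : Nat.card (Σ r : ↥(Finset.range (N - m)), Wt m (r : ℕ)) =
      ∑ i ∈ Finset.range (N - m), L m i := by
    letI : ∀ n : ℕ, Fintype (Wt m n) := fun _ => Fintype.ofFinite _
    rw [Nat.card_eq_fintype_card, Fintype.card_sigma]
    rw [← Finset.sum_coe_sort (Finset.range (N - m)) (fun i => L m i)]
    exact Finset.sum_congr rfl (fun i _ => (Nat.card_eq_fintype_card).symm)
  rw [hsig] at e
  have hu : Nat.card Unit = 1 := Nat.card_unique
  rw [hu] at e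
  show Nat.card (Wt m N) = _
  exact e.symm

lemma ML {m : ℕ} (hm : 1 ≤ m) (q : ℕ) : L m q = L m (q - 1) + U m (q + 1 - m) := by
  by_cases hq : q < m
  · have h1 : q + 1 - m = 0 := by omega
    rw [h1]
    have : U m 0 = 0 := rfl
    rw [this, L_small hq, L_small (show q - 1 < m by omega)]
  · push_neg at hq
    rw [L_rec hm hq, U_eq m (q + 1 - m) (by omega)]
    have : q + 1 - m - 1 = q - m := by omega
    rw [this]; omega

lemma T_small {m q : ℕ} (h : q < m) : T m q = 0 := by
  rw [T, show q + 1 - m = 0 by omega]; rfl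

lemma T_step {m q : ℕ} (hm : 1 ≤ m) (hq : m ≤ q) :
    T m q = T m (q - 1) + U m (q - m) + m * Mm m (q - m) := by
  rw [T, show q + 1 - m = (q - m) + 1 by omega, Finset.sum_range_succ,
    show q - (q - m) = m by omega]
  have h1 : ∀ i ∈ Finset.range (q - m), (q - i) * Mm m i = (q - 1 - i) * Mm m i + Mm m i := by
    intro i hi
    rw [Finset.mem_range] at hi
    have : q - i = (q - 1 - i) + 1 := by omega
    rw [this]; ring
  rw [Finset.sum_congr rfl h1, Finset.sum_add_distrib]
  rw [T, show q - 1 + 1 - m = q - m by omega, U]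

lemma TI {m : ℕ} (hm : 1 ≤ m) (q : ℕ) :
    T m q + (m - 1) * Mm m q + 1 = m * Mm m (q + 1) := by
  induction q using Nat.strong_induction_on with
  | _ q ih =>
    by_cases hq : q < m
    · rw [T_small hq, Mm_small (by omega), Mm_small (by omega)]
      simp; omega
    · push_neg at hq
      have ih1 := ih (q - 1) (by omega)
      have e1 := T_step hm hq
      have e2 : Mm m (q + 1) = Mm m q + U m (q + 1 - m) := by
        rw [Mm_succ, show Mm m q = L m (q-1) from rfl]; exact ML hm q
      have e3 : Mm m q = Mm m (q - 1) + U m (q - m) := by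
        have h := ML hm (q - 1)
        rw [show q - 1 + 1 - m = q - m by omega] at h
        show L m (q - 1) = L m (q - 1 - 1) + U m (q - m)
        exact h
      have e4 : U m (q + 1 - m) = U m (q - m) + Mm m (q - m) := by
        rw [show q + 1 - m = (q - m) + 1 by omega]; exact U_succ m (q - m)
      have h5 : T m (q - 1) + (m - 1) * Mm m (q - 1) + 1 = m * Mm m q := by
        rw [show q - 1 + 1 = q by omega] at ih1; exact ih1
      zify [hm] at e1 e2 e3 e4 h5 ⊢
      linear_combination e1 + h5 + (m - 1 : ℤ) * e3 - m * e4 + 0 * e2 - m * e2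



lemma goodC_univ {m n : ℕ} (hm : 1 ≤ m) : GoodC m (Set.univ : Set (ZMod n)) := by
  intro v _
  exact ⟨v, fun t _ => Set.mem_univ _, 0, by omega, by simp⟩

/-- the "0 ∉ C" sets -/
def Cw (n : ℕ) (w : ℕ → Bool) : Set (ZMod n) := {v | v.val ≠ 0 ∧ w (v.val - 1) = true}

/-- indicator for the run-through-0 sets; `b := c - a` -/
def frun (n c a : ℕ) (w : ℕ → Bool) : ℕ → Bool := fun t =>
  decide (t < a) || decide (n - (c - a) < t ∧ t < n) ||
    (decide (a < t ∧ t < n - (c - a)) && w (t - a - 1))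

def Cr (n c a : ℕ) (w : ℕ → Bool) : Set (ZMod n) := {v | frun n c a w v.val = true}

section
variable {m n : ℕ}

lemma cast_sub_n [NeZero n] {x : ℕ} (hx : n ≤ x) :
    ((x : ℕ) : ZMod n) = ((x - n : ℕ) : ZMod n) := by
  rw [show x = (x - n) + n by omega, Nat.cast_add, ZMod.natCast_self, add_zero]
  rw [Nat.add_sub_cancel]

lemma cast_mem_Cw_iff [NeZero n] {w : ℕ → Bool} {t : ℕ} (ht : t < n) :
    ((t : ℕ) : ZMod n) ∈ Cw n w ↔ (t ≠ 0 ∧ w (t - 1) = true) := by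
  show (((t : ℕ) : ZMod n).val ≠ 0 ∧ w (((t : ℕ) : ZMod n).val - 1) = true) ↔ _
  rw [ZMod.val_cast_of_lt ht]

lemma cast_mem_Cr_iff [NeZero n] {c a : ℕ} {w : ℕ → Bool} {t : ℕ} (ht : t < n) :
    ((t : ℕ) : ZMod n) ∈ Cr n c a w ↔ frun n c a w t = true := by
  simp only [Cr, Set.mem_setOf_eq, ZMod.val_cast_of_lt ht]

lemma goodC_Cw (hm : 1 ≤ m) (hn : m + 1 ≤ n) {w : ℕ → Bool}
    (hw : WGood m (n - 1) w) : GoodC m (Cw n w) := by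
  haveI : NeZero n := ⟨by omega⟩
  intro v hv
  obtain ⟨hv0, hvw⟩ := hv
  have hvlt : v.val < n := ZMod.val_lt v
  have hv0' : 1 ≤ v.val := by omega
  obtain ⟨s, hs1, hs2, hs3, hs4⟩ := hw.2 (v.val - 1) hvw
  refine ⟨((s + 1 : ℕ) : ZMod n), ?_, ?_⟩
  · intro t htm
    have hlt : s + 1 + t < n := by omega
    have : ((s + 1 : ℕ) : ZMod n) + (t : ZMod n) = ((s + 1 + t : ℕ) : ZMod n) := by
      push_cast; ring
    rw [this, cast_mem_Cw_iff hlt]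
    refine ⟨by omega, ?_⟩
    rw [show s + 1 + t - 1 = s + t by omega]
    exact hs4 (s + t) (by omega) (by omega)
  · refine ⟨v.val - 1 - s, by omega, ?_⟩
    have : ((s + 1 : ℕ) : ZMod n) + ((v.val - 1 - s : ℕ) : ZMod n) = ((v.val : ℕ) : ZMod n) := by
      rw [← Nat.cast_add]
      congr 1
      omega
    rw [this, ZMod.natCast_val, ZMod.cast_id]

lemma run_mem_Cr [NeZero n] {c a : ℕ} {w : ℕ → Bool} (ha1 : 1 ≤ a) (hac : a + 1 ≤ c)
    (hcn : c ≤ n) {e : ℕ} (he : e < c - 1) :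
    ((n - (c - a) + 1 + e : ℕ) : ZMod n) ∈ Cr n c a w := by
  set b := c - a with hb
  have hb1 : 1 ≤ b := by omega
  rcases Nat.lt_or_ge (n - b + 1 + e) n with hlt | hge
  · rw [cast_mem_Cr_iff hlt]
    simp only [frun, Bool.or_eq_true, decide_eq_true_eq]
    left; right
    omega
  · rw [cast_sub_n hge]
    have he' : n - b + 1 + e - n < a := by omega
    rw [cast_mem_Cr_iff (by omega)]
    simp only [frun, Bool.or_eq_true, decide_eq_true_eq]
    left; left
    omega

lemma goodC_Cr (hm : 1 ≤ m) (hn : m + 1 ≤ n) {c a : ℕ} {w : ℕ → Bool}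
    (ha1 : 1 ≤ a) (hac : a + 1 ≤ c) (hmc : m + 1 ≤ c) (hcn : c ≤ n)
    (hw : WGood m (n - c - 1) w) : GoodC m (Cr n c a w) := by
  haveI : NeZero n := ⟨by omega⟩
  set b := c - a with hb
  have hb1 : 1 ≤ b := by omega
  intro v hv
  have hvlt : v.val < n := ZMod.val_lt v
  have hvmem : frun n c a w v.val = true := hv
  have hvcast : ((v.val : ℕ) : ZMod n) = v := by rw [ZMod.natCast_val, ZMod.cast_id]
  simp only [frun, Bool.or_eq_true, decide_eq_true_eq, Bool.and_eq_true] at hvmem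
  have hrun : ∀ e0, e0 + m ≤ c - 1 → ∀ hee : True,
      (∀ t : ℕ, t < m → ((n - b + 1 + e0 : ℕ) : ZMod n) + (t : ZMod n) ∈ Cr n c a w) := by
    intro e0 he0 _ t htm
    have : ((n - b + 1 + e0 : ℕ) : ZMod n) + (t : ZMod n) = ((n - b + 1 + (e0 + t) : ℕ) : ZMod n) := by
      push_cast; ring
    rw [this]
    exact run_mem_Cr ha1 hac hcn (by omega)
  rcases hvmem with (hcase | hcase) | ⟨hmid, hww⟩
  · -- v.val < a : run, element index e = v.val + b - 1
    set e : ℕ := v.val + b - 1 with hedef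
    have hee : e < c - 1 := by omega
    set e0 : ℕ := min e (c - 1 - m) with he0def
    refine ⟨((n - b + 1 + e0 : ℕ) : ZMod n), hrun e0 (by omega) trivial, e - e0, by omega, ?_⟩
    have : ((n - b + 1 + e0 : ℕ) : ZMod n) + ((e - e0 : ℕ) : ZMod n)
        = ((n - b + 1 + e : ℕ) : ZMod n) := by
      rw [← Nat.cast_add]; congr 1; omega
    rw [this]
    have : ((n - b + 1 + e : ℕ) : ZMod n) = ((v.val : ℕ) : ZMod n) := by
      rw [cast_sub_n (by omega)]; congr 1; omega
    rw [this, hvcast]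
  · -- n - b < v.val : run, element index e = v.val - (n - b + 1)
    set e : ℕ := v.val - (n - b + 1) with hedef
    have hee : e < c - 1 := by omega
    set e0 : ℕ := min e (c - 1 - m) with he0def
    refine ⟨((n - b + 1 + e0 : ℕ) : ZMod n), hrun e0 (by omega) trivial, e - e0, by omega, ?_⟩
    have : ((n - b + 1 + e0 : ℕ) : ZMod n) + ((e - e0 : ℕ) : ZMod n)
        = ((n - b + 1 + e : ℕ) : ZMod n) := by
      rw [← Nat.cast_add]; congr 1; omega
    rw [this]
    have : ((n - b + 1 + e : ℕ) : ZMod n) = ((v.val : ℕ) : ZMod n) := by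
      congr 1; omega
    rw [this, hvcast]
  · -- middle
    obtain ⟨s, hs1, hs2, hs3, hs4⟩ := hw.2 (v.val - a - 1) hww
    refine ⟨((a + 1 + s : ℕ) : ZMod n), ?_, v.val - a - 1 - s, by omega, ?_⟩
    · intro t htm
      have hlt : a + 1 + s + t < n - b := by omega
      have : ((a + 1 + s : ℕ) : ZMod n) + (t : ZMod n) = ((a + 1 + (s + t) : ℕ) : ZMod n) := by
        push_cast; ring
      rw [this, cast_mem_Cr_iff (by omega)]
      simp only [frun, Bool.or_eq_true, decide_eq_true_eq, Bool.and_eq_true]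
      right
      refine ⟨⟨by omega, by omega⟩, ?_⟩
      rw [show a + 1 + (s + t) - a - 1 = s + t by omega]
      exact hs4 (s + t) (by omega) (by omega)
    · have : ((a + 1 + s : ℕ) : ZMod n) + ((v.val - a - 1 - s : ℕ) : ZMod n)
          = ((v.val : ℕ) : ZMod n) := by
        rw [← Nat.cast_add]; congr 1; omega
      rw [this, hvcast]

end


section
variable {m n : ℕ}

lemma frun_lt {c a t : ℕ} {w : ℕ → Bool} (h : t < a) : frun n c a w t = true := by
  simp [frun, h]

lemma frun_hi {c a t : ℕ} {w : ℕ → Bool} (h1 : n - (c - a) < t) (h2 : t < n) :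
    frun n c a w t = true := by
  simp [frun, h1, h2]

lemma frun_a {c a : ℕ} {w : ℕ → Bool} (hcn : c ≤ n) (hac : a ≤ c) :
    frun n c a w a = false := by
  simp only [frun, Bool.or_eq_false_iff, Bool.and_eq_false_iff, decide_eq_false_iff_not]
  refine ⟨⟨by omega, by omega⟩, ?_⟩
  left; omega

lemma frun_nb {c a : ℕ} {w : ℕ → Bool} (hcn : c ≤ n) (hac : a ≤ c) :
    frun n c a w (n - (c - a)) = false := by
  simp only [frun, Bool.or_eq_false_iff, Bool.and_eq_false_iff, decide_eq_false_iff_not]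
  refine ⟨⟨by omega, by omega⟩, ?_⟩
  left; omega

lemma frun_mid {c a t : ℕ} {w : ℕ → Bool} (h1 : a < t) (h2 : t < n - (c - a)) :
    frun n c a w t = w (t - a - 1) := by
  simp [frun, h1, h2, show ¬ t < a by omega, show ¬ (n - (c - a) < t) by omega]

/-- the big gluing map for the cyclic decomposition -/
noncomputable def fcyc (m n : ℕ) (hm : 1 ≤ m) (hn : m + 1 ≤ n) :
    (Unit ⊕ Wt m (n - 1) ⊕
      (Σ c : ↥(Finset.Icc (m + 1) n), ↥(Finset.Icc 1 ((c : ℕ) - 1)) × Wt m (n - (c : ℕ) - 1)))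
    → {C : Set (ZMod n) // GoodC m C}
  | Sum.inl _ => ⟨Set.univ, goodC_univ hm⟩
  | Sum.inr (Sum.inl w) => ⟨Cw n w.1, goodC_Cw hm hn w.2⟩
  | Sum.inr (Sum.inr ⟨c, aa, w⟩) =>
      ⟨Cr n (c : ℕ) (aa : ℕ) w.1, by
        have hc := Finset.mem_Icc.mp c.2
        have ha := Finset.mem_Icc.mp aa.2
        exact goodC_Cr hm hn ha.1 (by omega) (by omega) (by omega) w.2⟩

lemma fcyc_bij (m n : ℕ) (hm : 1 ≤ m) (hn : m + 1 ≤ n) :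
    Function.Bijective (fcyc m n hm hn) := by
  classical
  haveI : NeZero n := ⟨by omega⟩
  constructor
  · -- injectivity
    have hmem : ∀ z (v : ZMod n), (v ∈ (fcyc m n hm hn z).1 ↔ v ∈ (fcyc m n hm hn z).1) := by
      intro z v; rfl
    rintro (u1 | (w1 | ⟨c1, a1, w1⟩)) (u2 | (w2 | ⟨c2, a2, w2⟩)) heq <;>
      [skip; skip; skip; skip; skip; skip; skip; skip; skip]
    · rfl
    · -- univ vs Cw : 0
      exfalso
      have h := (Set.ext_iff.mp (congrArg Subtype.val heq)) 0
      simp only [fcyc, Set.mem_univ, true_iff] at h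
      have : (0 : ZMod n).val = 0 := ZMod.val_zero
      exact h.1 this
    · -- univ vs Cr : position a2... use cast a2
      exfalso
      have hc := Finset.mem_Icc.mp c2.2
      have ha := Finset.mem_Icc.mp a2.2
      have h := (Set.ext_iff.mp (congrArg Subtype.val heq)) (((a2 : ℕ) : ℕ) : ZMod n)
      simp only [fcyc, Set.mem_univ, true_iff] at h
      rw [cast_mem_Cr_iff (by omega)] at h
      rw [frun_a (by omega) (by omega)] at h
      simp at h
    · -- Cw vs univ
      exfalso
      have h := (Set.ext_iff.mp (congrArg Subtype.val heq)) 0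
      simp only [fcyc, Set.mem_univ, iff_true] at h
      have : (0 : ZMod n).val = 0 := ZMod.val_zero
      exact h.1 this
    · -- Cw vs Cw
      have hfun : w1.1 = w2.1 := by
        funext t
        rcases Nat.lt_or_ge t (n - 1) with h | h
        · have h' := (Set.ext_iff.mp (congrArg Subtype.val heq)) (((t + 1 : ℕ)) : ZMod n)
          simp only [fcyc] at h'
          rw [cast_mem_Cw_iff (by omega), cast_mem_Cw_iff (by omega)] at h'
          simp only [Nat.add_sub_cancel] at h'
          cases hb1 : w1.1 t
          · cases hb2 : w2.1 t
            · rfl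
            · exfalso
              have := h'.mpr ⟨by omega, hb2⟩
              rw [hb1] at this; simp at this
          · have := h'.mp ⟨by omega, hb1⟩
            exact this.2.symm ▸ rfl
        · rw [w1.2.1 t h, w2.2.1 t h]
      congr 1
      exact congrArg Sum.inl (Subtype.ext hfun)
    · -- Cw vs Cr : 0
      exfalso
      have hc := Finset.mem_Icc.mp c2.2
      have ha := Finset.mem_Icc.mp a2.2
      have h := (Set.ext_iff.mp (congrArg Subtype.val heq)) 0
      simp only [fcyc] at h
      have h0 : (0 : ZMod n) ∈ Cr n (c2 : ℕ) (a2 : ℕ) w2.1 := by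
        show frun n _ _ _ (0 : ZMod n).val = true
        rw [ZMod.val_zero]
        exact frun_lt (by omega)
      have := h.mpr h0
      exact this.1 ZMod.val_zero
    · -- Cr vs univ
      exfalso
      have hc := Finset.mem_Icc.mp c1.2
      have ha := Finset.mem_Icc.mp a1.2
      have h := (Set.ext_iff.mp (congrArg Subtype.val heq)) (((a1 : ℕ)) : ZMod n)
      simp only [fcyc, Set.mem_univ, iff_true] at h
      rw [cast_mem_Cr_iff (by omega), frun_a (by omega) (by omega)] at h
      simp at h
    · -- Cr vs Cw : 0
      exfalso
      have hc := Finset.mem_Icc.mp c1.2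
      have ha := Finset.mem_Icc.mp a1.2
      have h := (Set.ext_iff.mp (congrArg Subtype.val heq)) 0
      simp only [fcyc] at h
      have h0 : (0 : ZMod n) ∈ Cr n (c1 : ℕ) (a1 : ℕ) w1.1 := by
        show frun n _ _ _ (0 : ZMod n).val = true
        rw [ZMod.val_zero]
        exact frun_lt (by omega)
      have := h.mp h0
      exact this.1 ZMod.val_zero
    · -- Cr vs Cr
      have hc1 := Finset.mem_Icc.mp c1.2
      have ha1 := Finset.mem_Icc.mp a1.2
      have hc2 := Finset.mem_Icc.mp c2.2
      have ha2 := Finset.mem_Icc.mp a2.2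
      have hset := Set.ext_iff.mp (congrArg Subtype.val heq)
      simp only [fcyc] at hset
      have hmemiff : ∀ t : ℕ, t < n →
          (frun n (c1 : ℕ) (a1 : ℕ) w1.1 t = true ↔ frun n (c2 : ℕ) (a2 : ℕ) w2.1 t = true) := by
        intro t ht
        have := hset ((t : ℕ) : ZMod n)
        rwa [cast_mem_Cr_iff ht, cast_mem_Cr_iff ht] at this
      have haa : (a1 : ℕ) = (a2 : ℕ) := by
        by_contra hne
        rcases Nat.lt_or_ge (a1 : ℕ) (a2 : ℕ) with hlt | hge
        · have := (hmemiff (a1 : ℕ) (by omega)).mpr (frun_lt hlt)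
          rw [frun_a (by omega) (by omega)] at this
          simp at this
        · have hlt2 : (a2 : ℕ) < (a1 : ℕ) := by omega
          have := (hmemiff (a2 : ℕ) (by omega)).mp (frun_lt hlt2)
          rw [frun_a (by omega) (by omega)] at this
          simp at this
      have hcc : (c1 : ℕ) = (c2 : ℕ) := by
        by_contra hne
        have hb1 : 1 ≤ (c1:ℕ) - (a1:ℕ) := by omega
        have hb2 : 1 ≤ (c2:ℕ) - (a2:ℕ) := by omega
        rcases Nat.lt_or_ge ((c1:ℕ) - (a1:ℕ)) ((c2:ℕ) - (a2:ℕ)) with hlt | hge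
        · have := (hmemiff (n - ((c1:ℕ) - (a1:ℕ))) (by omega)).mpr
            (frun_hi (by omega) (by omega))
          rw [frun_nb (by omega) (by omega)] at this
          simp at this
        · have hlt2 : ((c2:ℕ) - (a2:ℕ)) < ((c1:ℕ) - (a1:ℕ)) := by omega
          have := (hmemiff (n - ((c2:ℕ) - (a2:ℕ))) (by omega)).mp
            (frun_hi (by omega) (by omega))
          rw [frun_nb (by omega) (by omega)] at this
          simp at this
      have e1 : c1 = c2 := Subtype.ext hcc
      subst e1
      have e2 : a1 = a2 := Subtype.ext haa
      subst e2
      have hww : w1.1 = w2.1 := by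
        funext t
        rcases Nat.lt_or_ge t (n - (c1 : ℕ) - 1) with h | h
        · have h' := hmemiff ((a1 : ℕ) + 1 + t) (by omega)
          rw [frun_mid (by omega) (by omega), frun_mid (by omega) (by omega),
            show (a1:ℕ) + 1 + t - (a1:ℕ) - 1 = t from by omega] at h'
          cases hb1 : w1.1 t
          · cases hb2 : w2.1 t
            · rfl
            · rw [hb1, hb2] at h'; simp at h'
          · rw [hb1] at h'; exact (h'.mp rfl).symm
        · rw [w1.2.1 t h, w2.2.1 t h]
      rw [Subtype.ext hww]
  · -- surjectivity
    rintro ⟨C, hC⟩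
    by_cases huniv : C = Set.univ
    · exact ⟨Sum.inl (), Subtype.ext (by simp [fcyc, huniv])⟩
    by_cases h0 : (0 : ZMod n) ∈ C
    · -- run through 0
      obtain ⟨v0, hv0⟩ := (Set.ne_univ_iff_exists_notMem (s := C)).mp huniv
      have hvcast0 : ((v0.val : ℕ) : ZMod n) = v0 := by rw [ZMod.natCast_val, ZMod.cast_id]
      have hEA : ∃ t : ℕ, ((t : ℕ) : ZMod n) ∉ C := ⟨v0.val, by rwa [hvcast0]⟩
      set a := Nat.find hEA with hadef
      have haspec : ((a : ℕ) : ZMod n) ∉ C := Nat.find_spec hEA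
      have hamin : ∀ t, t < a → ((t : ℕ) : ZMod n) ∈ C := by
        intro t ht
        by_contra hmem
        have : a ≤ t := Nat.find_le hmem
        omega
      have ha1 : 1 ≤ a := by
        rcases Nat.eq_zero_or_pos a with h | h
        · exfalso; apply haspec; rw [h]; simpa using h0
        · exact h
      have haN : a ≤ n - 1 := by
        have hpt : ((v0.val : ℕ) : ZMod n) ∉ C := by rwa [hvcast0]
        have : a ≤ v0.val := Nat.find_le hpt
        have := ZMod.val_lt v0
        omega
      have hEB : ∃ t : ℕ, 1 ≤ t ∧ ((n - t : ℕ) : ZMod n) ∉ C :=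
        ⟨n - a, by omega, by rwa [show n - (n - a) = a by omega]⟩
      set b := Nat.find hEB with hbdef
      have hbspec1 : 1 ≤ b := (Nat.find_spec hEB).1
      have hbspec : ((n - b : ℕ) : ZMod n) ∉ C := (Nat.find_spec hEB).2
      have hbmin : ∀ t, 1 ≤ t → t < b → ((n - t : ℕ) : ZMod n) ∈ C := by
        intro t h1 ht
        by_contra hmem
        have hpt : 1 ≤ t ∧ ((n - t : ℕ) : ZMod n) ∉ C := ⟨h1, hmem⟩
        have : b ≤ t := Nat.find_le hpt
        omega
      have hban : b ≤ n - a := by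
        have hpt : 1 ≤ n - a ∧ ((n - (n - a) : ℕ) : ZMod n) ∉ C :=
          ⟨by omega, by rwa [show n - (n - a) = a by omega]⟩
        exact Nat.find_le hpt
      -- the run length bound
      obtain ⟨u, hu, t0, ht0m, h0eq⟩ := hC 0 h0
      have claim1 : ∀ d, d < m - t0 → ((d : ℕ) : ZMod n) ∈ C := by
        intro d hd
        have hmem := hu (t0 + d) (by omega)
        have : u + ((t0 + d : ℕ) : ZMod n) = ((d : ℕ) : ZMod n) := by
          push_cast
          linear_combination -h0eq
        rwa [this] at hmem
      have claim2 : ∀ d, 1 ≤ d → d ≤ t0 → ((n - d : ℕ) : ZMod n) ∈ C := by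
        intro d h1 h2
        have hmem := hu (t0 - d) (by omega)
        have : u + ((t0 - d : ℕ) : ZMod n) = ((n - d : ℕ) : ZMod n) := by
          rw [Nat.cast_sub h2, Nat.cast_sub (by omega)]
          push_cast
          linear_combination -h0eq - ZMod.natCast_self n
        rwa [this] at hmem
      have hage : m - t0 ≤ a := by
        by_contra hcon
        push_neg at hcon
        exact haspec (claim1 a hcon)
      have hbge : t0 + 1 ≤ b := by
        by_contra hcon
        push_neg at hcon
        exact hbspec (claim2 b hbspec1 (by omega))
      set c := a + b with hcdef
      have hmc : m + 1 ≤ c := by omega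
      have hcn : c ≤ n := by omega
      -- the middle word
      set w : ℕ → Bool :=
        fun t => decide (t < n - c - 1) && decide (((a + 1 + t : ℕ) : ZMod n) ∈ C) with hwdef
      have hwg : WGood m (n - c - 1) w := by
        constructor
        · intro t ht
          simp only [hwdef, Bool.and_eq_false_iff, decide_eq_false_iff_not]
          left; omega
        · intro t ht
          have ht' : t < n - c - 1 ∧ ((a + 1 + t : ℕ) : ZMod n) ∈ C := by
            constructor
            · by_contra hcon
              simp only [hwdef, Bool.and_eq_true, decide_eq_true_eq] at ht
              exact hcon ht.1
            · simp only [hwdef, Bool.and_eq_true, decide_eq_true_eq] at ht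
              exact ht.2
          obtain ⟨u', hu', s0, hs0m, hveq⟩ := hC _ ht'.2
          -- hveq : cast (a+1+t) = u' + cast s0
          have hts : s0 ≤ t := by
            by_contra hcon
            push_neg at hcon
            have hmem := hu' (s0 - (t + 1)) (by omega)
            have : u' + ((s0 - (t + 1) : ℕ) : ZMod n) = ((a : ℕ) : ZMod n) := by
              rw [Nat.cast_sub (by omega)]
              push_cast
              push_cast at hveq
              linear_combination -hveq
            rw [this] at hmem
            exact haspec hmem
          have hupper : t - s0 + m ≤ n - c - 1 := by
            by_contra hcon
            push_neg at hcon
            have hg1 : a + 1 + t < n - b := by omega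
            set g : ℕ := n - b - (a + 1 + t) with hgdef
            have hgm : s0 + g < m := by omega
            have hmem := hu' (s0 + g) (by omega)
            have : u' + ((s0 + g : ℕ) : ZMod n) = ((n - b : ℕ) : ZMod n) := by
              rw [Nat.cast_sub (by omega)]
              push_cast
              push_cast at hveq
              have hgg : (g : ZMod n) = (n : ℕ) - (b : ℕ) - ((a : ℕ) + 1 + (t : ℕ)) := by
                rw [hgdef]
                have : (n - b - (a + 1 + t) : ℕ) = n - (b + a + 1 + t) := by omega
                rw [this, Nat.cast_sub (by omega)]
                push_cast
                ring
              rw [hgg]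
              linear_combination -hveq
            rw [this] at hmem
            exact hbspec hmem
          refine ⟨t - s0, by omega, by omega, by omega, fun j hj1 hj2 => ?_⟩
          simp only [hwdef, Bool.and_eq_true, decide_eq_true_eq]
          refine ⟨by omega, ?_⟩
          have hmem := hu' (j - (t - s0)) (by omega)
          have : u' + ((j - (t - s0) : ℕ) : ZMod n) = ((a + 1 + j : ℕ) : ZMod n) := by
            rw [Nat.cast_sub (by omega)]
            push_cast
            push_cast at hveq
            have : ((t - s0 : ℕ) : ZMod n) = (t : ℕ) - (s0 : ℕ) := by
              rw [Nat.cast_sub (by omega)]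
            rw [this]
            linear_combination -hveq
          rwa [this] at hmem
      -- assemble the data
      have hcmem : c ∈ Finset.Icc (m + 1) n := Finset.mem_Icc.mpr ⟨hmc, hcn⟩
      have hamem : a ∈ Finset.Icc 1 (c - 1) := Finset.mem_Icc.mpr ⟨ha1, by omega⟩
      refine ⟨Sum.inr (Sum.inr ⟨⟨c, hcmem⟩, ⟨a, hamem⟩, ⟨w, hwg⟩⟩), Subtype.ext ?_⟩
      show Cr n c a w = C
      have hba : c - a = b := by omega
      ext v
      have hvlt : v.val < n := ZMod.val_lt v
      have hvcast : ((v.val : ℕ) : ZMod n) = v := by rw [ZMod.natCast_val, ZMod.cast_id]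
      show frun n c a w v.val = true ↔ v ∈ C
      rcases Nat.lt_or_ge v.val a with hz | hz
      · rw [frun_lt hz]
        simp only [true_iff]
        have := hamin v.val hz
        rwa [hvcast] at this
      rcases Nat.eq_or_lt_of_le hz with hz2 | hz2
      · rw [← hz2, frun_a hcn (by omega)]
        simp only [Bool.false_eq_true, false_iff]
        rw [← hvcast, ← hz2]
        exact haspec
      rcases Nat.lt_or_ge v.val (n - b) with hz3 | hz3
      · rw [frun_mid hz2 (by omega)]
        simp only [hwdef, Bool.and_eq_true, decide_eq_true_eq]
        constructor
        · rintro ⟨-, hh⟩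
          rwa [show a + 1 + (v.val - a - 1) = v.val by omega, hvcast] at hh
        · intro hh
          refine ⟨by omega, ?_⟩
          rwa [show a + 1 + (v.val - a - 1) = v.val by omega, hvcast]
      rcases Nat.eq_or_lt_of_le hz3 with hz4 | hz4
      · rw [show v.val = n - (c - a) by omega, frun_nb hcn (by omega)]
        simp only [Bool.false_eq_true, false_iff]
        rw [← hvcast, show v.val = n - b by omega]
        exact hbspec
      · rw [frun_hi (by omega) hvlt]
        simp only [true_iff]
        have := hbmin (n - v.val) (by omega) (by omega)
        rwa [show n - (n - v.val) = v.val by omega, hvcast] at this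
    · -- 0 ∉ C : linear word
      set w : ℕ → Bool :=
        fun t => decide (t < n - 1) && decide (((t + 1 : ℕ) : ZMod n) ∈ C) with hwdef
      have hwg : WGood m (n - 1) w := by
        constructor
        · intro t ht
          simp only [hwdef, Bool.and_eq_false_iff, decide_eq_false_iff_not]
          left; omega
        · intro t ht
          have ht' : t < n - 1 ∧ ((t + 1 : ℕ) : ZMod n) ∈ C := by
            simp only [hwdef, Bool.and_eq_true, decide_eq_true_eq] at ht
            exact ht
          obtain ⟨u', hu', s0, hs0m, hveq⟩ := hC _ ht'.2
          have hts : s0 ≤ t := by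
            by_contra hcon
            push_neg at hcon
            have hmem := hu' (s0 - (t + 1)) (by omega)
            have : u' + ((s0 - (t + 1) : ℕ) : ZMod n) = 0 := by
              rw [Nat.cast_sub (by omega)]
              push_cast
              push_cast at hveq
              linear_combination -hveq
            rw [this] at hmem
            exact h0 hmem
          have hupper : t - s0 + m ≤ n - 1 := by
            by_contra hcon
            push_neg at hcon
            set g : ℕ := n - (t + 1) with hgdef
            have hg1 : 1 ≤ g := by omega
            have hgm : s0 + g < m := by omega
            have hmem := hu' (s0 + g) (by omega)
            have : u' + ((s0 + g : ℕ) : ZMod n) = 0 := by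
              push_cast
              push_cast at hveq
              have hgg : (g : ZMod n) = (n : ℕ) - ((t : ℕ) + 1) := by
                rw [hgdef, Nat.cast_sub (by omega)]
                push_cast
                ring
              rw [hgg]
              rw [ZMod.natCast_self]
              linear_combination -hveq
            rw [this] at hmem
            exact h0 hmem
          refine ⟨t - s0, by omega, by omega, by omega, fun j hj1 hj2 => ?_⟩
          simp only [hwdef, Bool.and_eq_true, decide_eq_true_eq]
          refine ⟨by omega, ?_⟩
          have hmem := hu' (j - (t - s0)) (by omega)
          have : u' + ((j - (t - s0) : ℕ) : ZMod n) = ((j + 1 : ℕ) : ZMod n) := by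
            rw [Nat.cast_sub (by omega)]
            push_cast
            push_cast at hveq
            have : ((t - s0 : ℕ) : ZMod n) = (t : ℕ) - (s0 : ℕ) := by
              rw [Nat.cast_sub (by omega)]
            rw [this]
            linear_combination -hveq
          rwa [this] at hmem
      refine ⟨Sum.inr (Sum.inl ⟨w, hwg⟩), Subtype.ext ?_⟩
      show Cw n w = C
      ext v
      have hvlt : v.val < n := ZMod.val_lt v
      have hvcast : ((v.val : ℕ) : ZMod n) = v := by rw [ZMod.natCast_val, ZMod.cast_id]
      show (v.val ≠ 0 ∧ w (v.val - 1) = true) ↔ v ∈ C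
      constructor
      · rintro ⟨hv0, hvw⟩
        simp only [hwdef, Bool.and_eq_true, decide_eq_true_eq] at hvw
        have := hvw.2
        rwa [show v.val - 1 + 1 = v.val by omega, hvcast] at this
      · intro hv
        have hv0 : v.val ≠ 0 := by
          intro hcon
          apply h0
          have : v = 0 := by
            rw [← hvcast, hcon]
            simp
          rwa [this] at hv
        refine ⟨hv0, ?_⟩
        simp only [hwdef, Bool.and_eq_true, decide_eq_true_eq]
        refine ⟨by omega, ?_⟩
        rwa [show v.val - 1 + 1 = v.val by omega, hvcast]

end


lemma aC_formula {m n : ℕ} (hm : 1 ≤ m) (h : m + 1 ≤ n) :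
    aC m n = 1 + L m (n - 1) + T m (n - 1) := by
  classical
  have e := Nat.card_congr (Equiv.ofBijective _ (fcyc_bij m n hm h))
  rw [Nat.card_sum, Nat.card_sum] at e
  have hsig : Nat.card
      (Σ c : ↥(Finset.Icc (m + 1) n), ↥(Finset.Icc 1 ((c : ℕ) - 1)) × Wt m (n - (c : ℕ) - 1))
      = T m (n - 1) := by
    letI : ∀ k : ℕ, Fintype (Wt m k) := fun _ => Fintype.ofFinite _
    rw [Nat.card_eq_fintype_card, Fintype.card_sigma]
    have hterm : ∀ c : ↥(Finset.Icc (m + 1) n),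
        Fintype.card (↥(Finset.Icc 1 ((c : ℕ) - 1)) × Wt m (n - (c : ℕ) - 1))
          = ((c : ℕ) - 1) * L m (n - (c : ℕ) - 1) := by
      intro c
      rw [Fintype.card_prod, Fintype.card_coe, Nat.card_Icc,
        show (c : ℕ) - 1 + 1 - 1 = (c : ℕ) - 1 from by omega,
        show Fintype.card (Wt m (n - (c : ℕ) - 1)) = L m (n - (c : ℕ) - 1) from
          (Nat.card_eq_fintype_card).symm]
    rw [Finset.sum_congr rfl (fun c _ => hterm c)]
    have hcoe := Finset.sum_coe_sort (Finset.Icc (m + 1) n)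
      (fun x => (x - 1) * L m (n - x - 1))
    rw [hcoe, T]
    refine Finset.sum_nbij' (fun c => n - c) (fun i => n - i) ?_ ?_ ?_ ?_ ?_
    · intro c hc
      rw [Finset.mem_Icc] at hc
      rw [Finset.mem_range]
      omega
    · intro i hi
      rw [Finset.mem_range] at hi
      rw [Finset.mem_Icc]
      omega
    · intro c hc
      rw [Finset.mem_Icc] at hc
      omega
    · intro i hi
      rw [Finset.mem_range] at hi
      omega
    · intro c hc
      rw [Finset.mem_Icc] at hc
      rw [Mm]
      congr 1 <;> omega
  rw [hsig] at e
  have hu : Nat.card Unit = 1 := Nat.card_unique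
  rw [hu] at e
  have hL : Nat.card (Wt m (n - 1)) = L m (n - 1) := rfl
  rw [hL] at e
  show Nat.card {C : Set (ZMod n) // GoodC m C} = _
  omega


lemma aC_small {m n : ℕ} (h1 : 1 ≤ n) (h2 : n ≤ m) : aC m n = 2 := by
  have hNZ : NeZero n := ⟨by omega⟩
  rw [aC, Nat.card_eq_two_iff]
  have hemp : GoodC m (∅ : Set (ZMod n)) := fun v hv => absurd hv (Set.notMem_empty v)
  have huniv : GoodC m (Set.univ : Set (ZMod n)) := by
    intro v _
    exact ⟨v, fun t _ => Set.mem_univ _, 0, by omega, by simp⟩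
  refine ⟨⟨∅, hemp⟩, ⟨Set.univ, huniv⟩, ?_, ?_⟩
  · intro hEq
    have := congrArg (fun S => (0 : ZMod n) ∈ S.1) hEq
    simp at this
  · rw [Set.eq_univ_iff_forall]
    rintro ⟨C, hC⟩
    rcases Set.eq_empty_or_nonempty C with rfl | ⟨v, hv⟩
    · simp
    · have : C = Set.univ := by
        obtain ⟨u, hu, _⟩ := hC v hv
        rw [Set.eq_univ_iff_forall]
        intro w
        have hval : ((w - u).val : ZMod n) = w - u := ZMod.natCast_rightInverse (w - u)
        have hlt : (w - u).val < m := lt_of_lt_of_le (ZMod.val_lt _) h2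
        have := hu (w - u).val hlt
        rwa [hval, add_sub_cancel] at this
      simp [Set.mem_insert_iff, Set.mem_singleton_iff, Subtype.ext_iff, this]

lemma KI {m N : ℕ} (hm : 1 ≤ m) (hN : 2 ≤ N) :
    aC m N + (m - 1) * L m (N - 2) = (m + 1) * L m (N - 1) := by
  by_cases hsm : N ≤ m
  · rw [aC_small (by omega) hsm, L_small (show N - 2 < m by omega),
      L_small (show N - 1 < m by omega)]
    have : 1 ≤ m := hm
    omega
  · push_neg at hsm
    rw [aC_formula hm (by omega)]
    have hTI := TI hm (N - 1)
    rw [show N - 1 + 1 = N by omega] at hTI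
    have h1 : Mm m (N - 1) = L m (N - 2) := by
      rw [Mm, show N - 1 - 1 = N - 2 from by omega]
    have h2 : Mm m N = L m (N - 1) := rfl
    rw [h1, h2] at hTI
    zify [hm] at hTI ⊢
    linear_combination hTI

lemma LR {m q : ℕ} (hm : 1 ≤ m) (hq : m + 1 ≤ q) :
    L m q + L m (q - 2) = 2 * L m (q - 1) + L m (q - m - 1) := by
  have h1 := ML hm q
  have h2 := ML hm (q - 1)
  rw [show q - 1 + 1 - m = q - m by omega, show q - 1 - 1 = q - 2 by omega] at h2
  have h3 : U m (q + 1 - m) = U m (q - m) + Mm m (q - m) := by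
    rw [show q + 1 - m = (q - m) + 1 by omega]; exact U_succ m (q - m)
  have h4 : Mm m (q - m) = L m (q - m - 1) := rfl
  omega
end NDAux

namespace NDAux

lemma cast_ne_zero' {n d : ℕ} [NeZero n] (h1 : 1 ≤ d) (h2 : d < n) :
    ((d : ℕ) : ZMod n) ≠ 0 := by
  intro hcon
  have := ZMod.val_cast_of_lt h2
  rw [hcon, ZMod.val_zero] at this
  omega

lemma ball_eq {k n : ℕ} (hk : 1 ≤ k) (hn : 2 * k + 2 ≤ n) (v : ZMod n) :
    insert v ((cyclePow n k).neighborSet v) =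
      {w : ZMod n | ∃ t : ℕ, t < 2 * k + 1 ∧ w = v - (k : ZMod n) + (t : ZMod n)} := by
  haveI : NeZero n := ⟨by omega⟩
  ext w
  simp only [Set.mem_insert_iff, SimpleGraph.mem_neighborSet, Set.mem_setOf_eq]
  constructor
  · rintro (rfl | hadj)
    · exact ⟨k, by omega, by push_cast; ring⟩
    · rw [cyclePow, SimpleGraph.fromRel_adj] at hadj
      obtain ⟨hne, h | h⟩ := hadj
      · obtain ⟨t, ht1, ht2, rfl⟩ := h
        exact ⟨k + t, by omega, by push_cast; ring⟩
      · obtain ⟨t, ht1, ht2, hw⟩ := h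
        refine ⟨k - t, by omega, ?_⟩
        rw [Nat.cast_sub ht2]
        linear_combination -hw
  · rintro ⟨t, htm, rfl⟩
    rcases Nat.lt_trichotomy t k with h | h | h
    · right
      rw [cyclePow, SimpleGraph.fromRel_adj]
      have hne : v - (k : ZMod n) + (t : ZMod n) ≠ v := by
        intro hcon
        have : ((k - t : ℕ) : ZMod n) = 0 := by
          rw [Nat.cast_sub (by omega)]
          linear_combination -hcon
        exact cast_ne_zero' (by omega) (by omega) this
      refine ⟨Ne.symm hne, Or.inr ⟨k - t, by omega, by omega, ?_⟩⟩
      rw [Nat.cast_sub (by omega)]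
      ring
    · left
      rw [h]
      ring
    · right
      rw [cyclePow, SimpleGraph.fromRel_adj]
      have hne : v ≠ v - (k : ZMod n) + (t : ZMod n) := by
        intro hcon
        have : ((t - k : ℕ) : ZMod n) = 0 := by
          rw [Nat.cast_sub (by omega)]
          linear_combination -hcon
        exact cast_ne_zero' (by omega) (by omega) this
      refine ⟨hne, Or.inl ⟨t - k, by omega, by omega, ?_⟩⟩
      rw [Nat.cast_sub (by omega)]
      ring

lemma dig_iff {k n : ℕ} (hk : 1 ≤ k) (hn : 2 * k + 2 ≤ n) (S : Set (ZMod n)) :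
    DigConvex (cyclePow n k) S ↔ GoodC (2 * k + 1) Sᶜ := by
  haveI : NeZero n := ⟨by omega⟩
  constructor
  · intro hD v hv
    rw [Set.mem_compl_iff] at hv
    by_cases hsub : insert v ((cyclePow n k).neighborSet v) ⊆ closedNbhd (cyclePow n k) S
    · exact absurd (hD v hsub) hv
    · rw [Set.not_subset] at hsub
      obtain ⟨x, hx1, hx2⟩ := hsub
      rw [ball_eq hk hn] at hx1
      obtain ⟨t, htm, hxeq⟩ := hx1
      refine ⟨x - (k : ZMod n), ?_, 2 * k - t, by omega, ?_⟩
      · intro t' ht'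
        rw [Set.mem_compl_iff]
        intro hmem
        apply hx2
        rw [closedNbhd]
        refine Set.mem_biUnion hmem ?_
        rw [ball_eq hk hn]
        refine ⟨2 * k - t', by omega, ?_⟩
        rw [Nat.cast_sub (by omega)]
        push_cast
        ring
      · rw [Nat.cast_sub (by omega)]
        push_cast
        linear_combination -hxeq
  · intro hG v hsub
    by_contra hv
    obtain ⟨u, hall, t, htm, hveq⟩ := hG v ((Set.mem_compl_iff S v).mpr hv)
    have hxmem : u + (k : ZMod n) ∈ insert v ((cyclePow n k).neighborSet v) := by
      rw [ball_eq hk hn]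
      refine ⟨2 * k - t, by omega, ?_⟩
      rw [Nat.cast_sub (by omega)]
      push_cast
      linear_combination -hveq
    have hx := hsub hxmem
    rw [closedNbhd, Set.mem_iUnion₂] at hx
    obtain ⟨s, hs, hxs⟩ := hx
    rw [ball_eq hk hn] at hxs
    obtain ⟨t', ht', hxeq⟩ := hxs
    have hsc : s ∈ Sᶜ := by
      have hmem := hall (2 * k - t') (by omega)
      have heq : u + ((2 * k - t' : ℕ) : ZMod n) = s := by
        rw [Nat.cast_sub (by omega)]
        push_cast
        linear_combination hxeq
      rwa [heq] at hmem
    exact hsc hs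

lemma adj_complete {k n : ℕ} (h3 : 3 ≤ n) (hn : n ≤ 2 * k + 1) {v w : ZMod n}
    (hne : v ≠ w) : (cyclePow n k).Adj v w := by
  haveI : NeZero n := ⟨by omega⟩
  have hdlt : (w - v).val < n := ZMod.val_lt _
  have hd0 : (w - v).val ≠ 0 := by
    intro hcon
    have h1 : w - v = 0 := (ZMod.val_eq_zero (w - v)).mp hcon
    exact hne (sub_eq_zero.mp h1).symm
  have hcast : (((w - v).val : ℕ) : ZMod n) = w - v := by
    rw [ZMod.natCast_val, ZMod.cast_id]
  rw [cyclePow, SimpleGraph.fromRel_adj]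
  refine ⟨hne, ?_⟩
  rcases le_or_gt ((w - v).val) k with h | h
  · left
    refine ⟨(w - v).val, by omega, h, ?_⟩
    linear_combination -hcast
  · right
    refine ⟨n - (w - v).val, by omega, by omega, ?_⟩
    rw [Nat.cast_sub (by omega), ZMod.natCast_self]
    linear_combination hcast

lemma nD_complete {k n : ℕ} (h3 : 3 ≤ n) (hn : n ≤ 2 * k + 1) :
    nD (cyclePow n k) = 2 := by
  haveI : NeZero n := ⟨by omega⟩
  rw [nD, Nat.card_eq_two_iff]
  have hconv_univ : DigConvex (cyclePow n k) Set.univ := fun v _ => Set.mem_univ v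
  have hconv_empty : DigConvex (cyclePow n k) ∅ := by
    intro v h
    exfalso
    have hv : v ∈ closedNbhd (cyclePow n k) ∅ := h (Set.mem_insert v _)
    rw [closedNbhd] at hv
    simp at hv
  refine ⟨⟨∅, hconv_empty⟩, ⟨Set.univ, hconv_univ⟩, ?_, ?_⟩
  · intro hEq
    have := congrArg (fun S => (0 : ZMod n) ∈ S.1) hEq
    simp at this
  · rw [Set.eq_univ_iff_forall]
    rintro ⟨S, hS⟩
    rcases Set.eq_empty_or_nonempty S with rfl | ⟨s0, hs0⟩
    · simp
    · have hSuniv : S = Set.univ := by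
        rw [Set.eq_univ_iff_forall]
        intro v
        apply hS
        intro x _
        rw [closedNbhd]
        refine Set.mem_biUnion hs0 ?_
        by_cases hxs : x = s0
        · rw [hxs]; exact Set.mem_insert _ _
        · exact Set.mem_insert_of_mem _ (adj_complete h3 hn (Ne.symm hxs))
      simp [Subtype.ext_iff, hSuniv]

lemma nD_eq_aC {k n : ℕ} (hk : 1 ≤ k) (hn3 : 3 ≤ n) :
    nD (cyclePow n k) = aC (2 * k + 1) n := by
  rcases le_or_gt n (2 * k + 1) with hle | hlt
  · rw [aC_small (by omega) hle]
    exact nD_complete hn3 hle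
  · rw [nD, aC]
    exact Nat.card_congr
      ⟨fun S => ⟨S.1ᶜ, (dig_iff hk (by omega) S.1).mp S.2⟩,
       fun C => ⟨C.1ᶜ, (dig_iff hk (by omega) C.1ᶜ).mpr (by rw [compl_compl]; exact C.2)⟩,
       fun S => Subtype.ext (compl_compl _), fun C => Subtype.ext (compl_compl _)⟩

end NDAux

/-- For `k ≥ 1` and `n ≥ 2k+5`,
`n_D(C_n^k) = 2·n_D(C_{n-1}^k) - n_D(C_{n-2}^k) + n_D(C_{n-2k-2}^k)`. -/
theorem nD_cyclePow_recurrence (k n : ℕ) (hk : 1 ≤ k) (hn : 2 * k + 5 ≤ n) :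
    (nD (cyclePow n k) : ℤ) =
      2 * nD (cyclePow (n - 1) k) - nD (cyclePow (n - 2) k)
        + nD (cyclePow (n - 2 * k - 2) k) := by
  have hm1 : 1 ≤ 2 * k + 1 := by omega
  set m := 2 * k + 1 with hmdef
  rw [NDAux.nD_eq_aC hk (by omega), NDAux.nD_eq_aC hk (by omega),
      NDAux.nD_eq_aC hk (by omega), NDAux.nD_eq_aC hk (by omega)]
  have k0 := NDAux.KI hm1 (show 2 ≤ n by omega)
  have k1 := NDAux.KI hm1 (show 2 ≤ n - 1 by omega)
  have k2 := NDAux.KI hm1 (show 2 ≤ n - 2 by omega)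
  have k3 := NDAux.KI hm1 (show 2 ≤ n - 2 * k - 2 by omega)
  rw [show n - 1 - 2 = n - 3 by omega, show n - 1 - 1 = n - 2 by omega] at k1
  rw [show n - 2 - 2 = n - 4 by omega, show n - 2 - 1 = n - 3 by omega] at k2
  rw [show n - 2 * k - 2 - 2 = n - m - 3 by omega,
      show n - 2 * k - 2 - 1 = n - m - 2 by omega] at k3
  have r1 := NDAux.LR hm1 (show m + 1 ≤ n - 1 by omega)
  have r2 := NDAux.LR hm1 (show m + 1 ≤ n - 2 by omega)
  rw [show n - 1 - 2 = n - 3 by omega, show n - 1 - 1 = n - 2 by omega,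
      show n - 1 - m - 1 = n - m - 2 by omega] at r1
  rw [show n - 2 - 2 = n - 4 by omega, show n - 2 - 1 = n - 3 by omega,
      show n - 2 - m - 1 = n - m - 3 by omega] at r2
  zify [hm1] at k0 k1 k2 k3 r1 r2
  linear_combination k0 - 2 * k1 + k2 - k3 + ((m : ℤ) + 1) * r1 - ((m : ℤ) - 1) * r2
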